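/- Let κ_1, ..., κ_6 be positive real numbers with κ_1 < κ_3, and define the polynomial M(x_3, x_4, x_5) = κ_2κ_4κ_5(κ_1 − κ_3) x_3 x_5 + κ_1κ_2κ_4κ_5 x_4 x_5 + κ_4κ_5κ_6(κ_1 + κ_2) x_5² + κ_1κ_2κ_3κ_4 x_3 + κ_1κ_2κ_3κ_5 x_4 + κ_1κ_5κ_6(κ_3 + κ_2) x_5 + κ_1κ_2κ_3κ_6. Then there exist x_3, x_4, x_5 > 0 with M(x_3, x_4, x_5) < 0. -/

import Mathlib

/-- **Multistationarity regime of the hybrid histidine kinase network.**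
If the rate constants satisfy `κ₁ < κ₃`, the Jacobian determinant polynomial
`M(x₃,x₄,x₅)` takes negative values on the positive orthant. -/
theorem histidine_kinase_jacobian_takes_negative_values
    (κ1 κ2 κ3 κ4 κ5 κ6 : ℝ)
    (h1 : 0 < κ1) (h2 : 0 < κ2) (h3 : 0 < κ3)
    (h4 : 0 < κ4) (h5 : 0 < κ5) (h6 : 0 < κ6)
    (h13 : κ1 < κ3) :
    ∃ x3 x4 x5 : ℝ, 0 < x3 ∧ 0 < x4 ∧ 0 < x5 ∧
      κ2 * κ4 * κ5 * (κ1 - κ3) * x3 * x5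
          + κ1 * κ2 * κ4 * κ5 * x4 * x5
          + κ4 * κ5 * κ6 * (κ1 + κ2) * x5 ^ 2
          + κ1 * κ2 * κ3 * κ4 * x3
          + κ1 * κ2 * κ3 * κ5 * x4
          + κ1 * κ5 * κ6 * (κ3 + κ2) * x5
          + κ1 * κ2 * κ3 * κ6 < 0 := by
  have hd : 0 < κ5 * (κ3 - κ1) := mul_pos h5 (sub_pos.mpr h13)
  set s : ℝ := (κ1 * κ3 + 1) / (κ5 * (κ3 - κ1)) with hs_def
  have hs : 0 < s := div_pos (by positivity) hd
  set R : ℝ := κ1 * κ2 * κ4 * κ5 * s + κ4 * κ5 * κ6 * (κ1 + κ2) * s ^ 2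
      + κ1 * κ2 * κ3 * κ5 + κ1 * κ5 * κ6 * (κ3 + κ2) * s + κ1 * κ2 * κ3 * κ6 with hR_def
  have hR : 0 < R := by positivity
  refine ⟨(R + 1) / (κ2 * κ4), 1, s, by positivity, one_pos, hs, ?_⟩
  have hkey : κ5 * (κ1 - κ3) * s = -(κ1 * κ3 + 1) := by
    rw [hs_def]
    field_simp
    have hne : κ3 - κ1 ≠ 0 := by linarith
    rw [div_eq_iff hne]; ring
  have hx3 : (κ2 * κ4) * ((R + 1) / (κ2 * κ4)) = R + 1 := by
    field_simp
  have heq : κ2 * κ4 * κ5 * (κ1 - κ3) * ((R + 1) / (κ2 * κ4)) * s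
      + κ1 * κ2 * κ3 * κ4 * ((R + 1) / (κ2 * κ4))
      = (κ2 * κ4 * ((R + 1) / (κ2 * κ4))) * (κ5 * (κ1 - κ3) * s + κ1 * κ3) := by ring
  have this' : κ2 * κ4 * κ5 * (κ1 - κ3) * ((R + 1) / (κ2 * κ4)) * s
      + κ1 * κ2 * κ3 * κ4 * ((R + 1) / (κ2 * κ4)) = -(R + 1) := by
    rw [heq, hx3]; linear_combination (R + 1) * hkey
  nlinarith [this']
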